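/- arXiv:1307.4819 — 3 statements merged into one kernel-verified Lean document; each statement's English description precedes it below -/
import Mathlib

section
/- Let C₊, C₋ be cochain complexes over K with a chain-level pairing ⟨·,·⟩ : C₊ ⊗ C₋ → K compatible with differentials (⟨dx, ξ⟩ + (−1)^{|x|}⟨x, dξ⟩ = 0), a chain-level product ⌣ and a degree −1 operation ∗ on C₋ satisfying d(ξ₀ ∗ ξ₁) = dξ₀ ∗ ξ₁ + (−1)^{|ξ₀|} ξ₀ ∗ dξ₁ + ξ₀ ⌣ ξ₁ − (−1)^{|ξ₀||ξ₁|} ξ₁ ⌣ ξ₀ (up to overall sign convention), and a cocycle β with ⟨β ⌣ ξ₀, ξ₁⟩ = ⟨β, ξ₀ ⌣ ξ₁⟩-type cyclic symmetry. Then the pairing ι((ξ₀,x₀),(ξ₁,x₁)) = ⟨x₀, ξ₁⟩ − (−1)^{|ξ₀|}⟨x₁, ξ₀⟩ + ⟨β, ξ₀ ∗ ξ₁⟩ on C̃ = C₋ ⊕ C₊ (with differential d̃(ξ,x) = (dξ, dx − β⌣ξ)) is a chain map, i.e., ι(d̃(ξ₀,x₀),(ξ₁,x₁)) + (−1)^{|ξ₀|}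 ι((ξ₀,x₀), d̃(ξ₁,x₁)) = 0. -/
/-- Chain-map property of the cone pairing
`ι((ξ₀,x₀),(ξ₁,x₁)) = ⟨x₀,ξ₁⟩ − (−1)^{|ξ₀|}⟨x₁,ξ₀⟩ + ⟨β, ξ₀ ∗ ξ₁⟩`
on `C̃ = C₋ ⊕ C₊` with `d̃(ξ,x) = (dξ, dx − β⌣ξ)`:
`ι(d̃(ξ₀,x₀),(ξ₁,x₁)) + (−1)^{|ξ₀|} ι((ξ₀,x₀), d̃(ξ₁,x₁)) = 0`.
Here `A` plays the role of `C₋`, `B` of `C₊`; the Koszul signs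
`s₀ = (−1)^{|ξ₀|}`, `s₁ = (−1)^{|ξ₁|}` (with `|ξ₀| + |ξ₁| = 2n − 1` odd, so
`s₁ = −s₀`) are carried as scalars. -/
theorem cone_pairing_is_chain_map
    {K A B : Type*} [Field K]
    [AddCommGroup A] [Module K A] [AddCommGroup B] [Module K B]
    (dA : A →ₗ[K] A) (dB : B →ₗ[K] B)
    (pair : B →ₗ[K] A →ₗ[K] K)
    (cupBA : B →ₗ[K] A →ₗ[K] B)   -- (β, ξ) ↦ β ⌣ ξ ∈ C₊
    (cupAA : A →ₗ[K] A →ₗ[K] A)   -- (ξ, ξ') ↦ ξ ⌣ ξ' ∈ C₋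
    (star : A →ₗ[K] A →ₗ[K] A)    -- the secondary product ∗
    (β : B) (s₀ s₁ : K) (ξ₀ ξ₁ : A) (x₀ x₁ : B)
    (hs₀ : s₀ * s₀ = 1) (hs₁ : s₁ = - s₀)
    -- compatibility of the pairing with the differentials
    (hpair₀ : pair (dB x₀) ξ₁ + s₀ * pair x₀ (dA ξ₁) = 0)
    (hpair₁ : pair (dB x₁) ξ₀ + s₁ * pair x₁ (dA ξ₀) = 0)
    -- β is a cocycle: pairing it against any coboundary vanishes
    (hβclosed : ∀ ζ : A, pair β (dA ζ) = 0)
    -- cyclic symmetry ⟨β ⌣ ξ, ξ'⟩ = ⟨β, ξ ⌣ ξ'⟩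
    (hcyc : ∀ ξ ξ' : A, pair (cupBA β ξ) ξ' = pair β (cupAA ξ ξ'))
    -- homotopy-commutativity (Leibniz) relation for ∗
    (hLeib : dA (star ξ₀ ξ₁)
      = - star (dA ξ₀) ξ₁ - s₀ • star ξ₀ (dA ξ₁)
        + cupAA ξ₀ ξ₁ - cupAA ξ₁ ξ₀) :
    (pair (dB x₀ - cupBA β ξ₀) ξ₁ - (- s₀) * pair x₁ (dA ξ₀)
        + pair β (star (dA ξ₀) ξ₁))
      + s₀ * (pair x₀ (dA ξ₁) - s₀ * pair (dB x₁ - cupBA β ξ₁) ξ₀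
        + pair β (star ξ₀ (dA ξ₁))) = 0 := by
  have hβ := hβclosed (star ξ₀ ξ₁)
  rw [hLeib] at hβ
  simp only [map_sub, map_add, map_neg, map_smul, LinearMap.sub_apply, LinearMap.add_apply,
    LinearMap.neg_apply, LinearMap.smul_apply, smul_eq_mul, hcyc] at hβ ⊢
  rw [hs₁] at hpair₁
  linear_combination hpair₀ - hβ - hpair₁ +
    (pair β ((cupAA ξ₁) ξ₀) - pair (dB x₁) ξ₀) * hs₀
end

section
/- With the pairing ι from the twisted complex as above, for any cocycles (ξ₀,x₀), (ξ₁,x₁) ∈ C̃ the symmetrization satisfies ι((ξ₀,x₀),(ξ₁,x₁)) + (−1)^{|ξ₀|} ι((ξ₁,x₁),(ξ₀,x₀)) = ⟨β, [ξ₀, ξ₁]⟩, where [ξ₀,ξ₁] := ξ₀ ∗ ξ₁ + (−1)^{|ξ₀||ξ₁|} ξ₁ ∗ ξ₀. -/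
/-- Symmetrization of the cone pairing: for cocycles `(ξ₀,x₀)`, `(ξ₁,x₁)` with
`ι((ξ₀,x₀),(ξ₁,x₁)) = ⟨x₀,ξ₁⟩ − (−1)^{|ξ₀|}⟨x₁,ξ₀⟩ + ⟨β, ξ₀ ∗ ξ₁⟩`, one has
`ι((ξ₀,x₀),(ξ₁,x₁)) + (−1)^{|ξ₀|} ι((ξ₁,x₁),(ξ₀,x₀)) = ⟨β, [ξ₀,ξ₁]⟩`, where
`[ξ₀,ξ₁] = ξ₀ ∗ ξ₁ + (−1)^{|ξ₀||ξ₁|} ξ₁ ∗ ξ₀`.  Since `|ξ₀| + |ξ₁| = 2n`,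
the relevant Koszul signs are all `s₀ = (−1)^{|ξ₀|}`. -/
theorem cone_pairing_symmetrization
    {K A B : Type*} [Field K]
    [AddCommGroup A] [Module K A] [AddCommGroup B] [Module K B]
    (pair : B →ₗ[K] A →ₗ[K] K)
    (star : A →ₗ[K] A →ₗ[K] A)
    (β : B) (s₀ : K) (hs₀ : s₀ * s₀ = 1)
    (ξ₀ ξ₁ : A) (x₀ x₁ : B) :
    (pair x₀ ξ₁ - s₀ * pair x₁ ξ₀ + pair β (star ξ₀ ξ₁))
      + s₀ * (pair x₁ ξ₀ - s₀ * pair x₀ ξ₁ + pair β (star ξ₁ ξ₀))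
      = pair β (star ξ₀ ξ₁ + s₀ • star ξ₁ ξ₀) := by
  simp only [map_add, map_smul, smul_eq_mul]
  ring_nf
  rw [show s₀ ^ 2 = 1 by rw [sq, hs₀]]
  ring
end

section
/- Nondegeneracy of the cone pairing: Let C̃ fit in a long exact sequence ⋯ → H₊^{k} → H̃^k →^p H₋^k →^{−B} H₊^{k+1} → ⋯ where H₊^k and H₋^{2n−k} are finite-dimensional and dually paired by ⟨·,·⟩, and the two multiplication maps B : H₋^k → H₊^{k+1} and B : H₋^{2n−k−1} → H₊^{2n−k} are mutually dual up to sign. Suppose I : H̃^k ⊗ H̃^{2n−k} → K is a bilinear pairing such that whenever x̃₁ is the image of x₁ ∈ H₊ and x̃₀ has image ξ₀ ∈ H₋, then I(x̃₀, x̃₁) = −⟨ξ₀, x₁⟩ (and symmetrically). Then I is nondegenerate. -/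
/-- A nondegenerate pairing between finite-dimensional spaces is a perfect pairing:
the induced map `V → Dual K W` is surjective. -/
lemma pairing_surj {K V W : Type*} [Field K]
    [AddCommGroup V] [Module K V] [FiniteDimensional K V]
    [AddCommGroup W] [Module K W] [FiniteDimensional K W]
    (p : V →ₗ[K] W →ₗ[K] K)
    (h1 : ∀ v, (∀ w, p v w = 0) → v = 0)
    (h2 : ∀ w, (∀ v, p v w = 0) → w = 0)
    (f : Module.Dual K W) : ∃ v, p v = f := by
  have hinj : Function.Injective p := by
    rw [← LinearMap.ker_eq_bot, Submodule.eq_bot_iff]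
    intro v hv
    exact h1 v fun w => by simpa using congrFun (congrArg DFunLike.coe hv) w
  have hinj' : Function.Injective p.flip := by
    rw [← LinearMap.ker_eq_bot, Submodule.eq_bot_iff]
    intro w hw
    exact h2 w fun v => by simpa using congrFun (congrArg DFunLike.coe hw) v
  have d1 : Module.finrank K V ≤ Module.finrank K (Module.Dual K W) :=
    LinearMap.finrank_le_finrank_of_injective hinj
  have d2 : Module.finrank K W ≤ Module.finrank K (Module.Dual K V) :=
    LinearMap.finrank_le_finrank_of_injective hinj'
  rw [Subspace.dual_finrank_eq] at d1 d2
  have heq : Module.finrank K V = Module.finrank K (Module.Dual K W) := by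
    rw [Subspace.dual_finrank_eq]; omega
  have hsurj := (LinearMap.injective_iff_surjective_of_finrank_eq_finrank heq).mp hinj
  exact hsurj f

/-- Double annihilator: if `w` is annihilated (under a perfect pairing `p`) by every
`v` that annihilates the submodule `T`, then `w ∈ T`. -/
lemma mem_of_ann {K V W : Type*} [Field K]
    [AddCommGroup V] [Module K V] [FiniteDimensional K V]
    [AddCommGroup W] [Module K W] [FiniteDimensional K W]
    (p : V →ₗ[K] W →ₗ[K] K)
    (h1 : ∀ v, (∀ w, p v w = 0) → v = 0)
    (h2 : ∀ w, (∀ v, p v w = 0) → w = 0)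
    (T : Submodule K W) (w : W)
    (hw : ∀ v, (∀ t ∈ T, p v t = 0) → p v w = 0) : w ∈ T := by
  by_contra hmem
  obtain ⟨f, hfw, hfT⟩ := T.exists_dual_map_eq_bot_of_notMem hmem inferInstance
  obtain ⟨v, hv⟩ := pairing_surj p h1 h2 f
  apply hfw
  rw [← hv]
  exact hw v fun t ht => by
    have : f t = 0 := by
      have : f t ∈ T.map f := Submodule.mem_map_of_mem ht
      rwa [hfT, Submodule.mem_bot] at this
    rw [← hv] at this; exact this


/-- Nondegeneracy of the cone pairing (Corollary 3.2 of the paper), in abstract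
linear-algebra form.  The spaces are:
`E = H₋^{k−1}`, `Ap = H₊^k`, `At = H̃^k`, `Am = H₋^k`, `Bp = H₊^{k+1}`,
`Dm = H₋^{2n−k−1}`, `Cp = H₊^{2n−k}`, `Ct = H̃^{2n−k}`, `Cm = H₋^{2n−k}`,
`F = H₊^{2n−k+1}`; `b0, b1, b2, b3` are the multiplication-by-`B` maps,
`i, q` the maps of the two long exact sequences, and the four pairings are the
duality pairings `⟨·,·⟩`, with `b0` dual to `b2` and `b1` dual to `b3` up to
sign.  If `I` restricts as prescribed by Lemma 3.1, then `I` is nondegenerate. -/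
theorem cone_pairing_nondegenerate
    {K E Ap At Am Bp Dm Cp Ct Cm F : Type*} [Field K]
    [AddCommGroup E] [Module K E] [FiniteDimensional K E]
    [AddCommGroup Ap] [Module K Ap] [FiniteDimensional K Ap]
    [AddCommGroup At] [Module K At] [FiniteDimensional K At]
    [AddCommGroup Am] [Module K Am] [FiniteDimensional K Am]
    [AddCommGroup Bp] [Module K Bp] [FiniteDimensional K Bp]
    [AddCommGroup Dm] [Module K Dm] [FiniteDimensional K Dm]
    [AddCommGroup Cp] [Module K Cp] [FiniteDimensional K Cp]
    [AddCommGroup Ct] [Module K Ct] [FiniteDimensional K Ct]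
    [AddCommGroup Cm] [Module K Cm] [FiniteDimensional K Cm]
    [AddCommGroup F] [Module K F] [FiniteDimensional K F]
    -- structure maps of the two long exact sequences
    (b0 : E →ₗ[K] Ap) (i1 : Ap →ₗ[K] At) (q1 : At →ₗ[K] Am) (b1 : Am →ₗ[K] Bp)
    (b3 : Dm →ₗ[K] Cp) (i2 : Cp →ₗ[K] Ct) (q2 : Ct →ₗ[K] Cm) (b2 : Cm →ₗ[K] F)
    (hex1 : Function.Exact b0 i1) (hex2 : Function.Exact i1 q1)
    (hex3 : Function.Exact q1 b1)
    (hex4 : Function.Exact b3 i2) (hex5 : Function.Exact i2 q2)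
    (hex6 : Function.Exact q2 b2)
    -- the four nondegenerate duality pairings
    (pAC : Am →ₗ[K] Cp →ₗ[K] K) (pCA : Cm →ₗ[K] Ap →ₗ[K] K)
    (pEF : E →ₗ[K] F →ₗ[K] K) (pDB : Dm →ₗ[K] Bp →ₗ[K] K)
    (hAC₁ : ∀ ξ, (∀ x, pAC ξ x = 0) → ξ = 0)
    (hAC₂ : ∀ x, (∀ ξ, pAC ξ x = 0) → x = 0)
    (hCA₁ : ∀ ξ, (∀ x, pCA ξ x = 0) → ξ = 0)
    (hCA₂ : ∀ x, (∀ ξ, pCA ξ x = 0) → x = 0)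
    (hEF₁ : ∀ η, (∀ y, pEF η y = 0) → η = 0)
    (hEF₂ : ∀ y, (∀ η, pEF η y = 0) → y = 0)
    (hDB₁ : ∀ η, (∀ y, pDB η y = 0) → η = 0)
    (hDB₂ : ∀ y, (∀ η, pDB η y = 0) → y = 0)
    -- the multiplication maps are mutually dual, up to sign
    (s s' : K) (hs : s = 1 ∨ s = -1) (hs' : s' = 1 ∨ s' = -1)
    (hdual1 : ∀ (ξ : Cm) (η : E), pCA ξ (b0 η) = s * pEF η (b2 ξ))
    (hdual2 : ∀ (η : Dm) (ξ : Am), pDB η (b1 ξ) = s' * pAC ξ (b3 η))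
    -- the pairing I and its behaviour on lifts (Lemma 3.1)
    (I : At →ₗ[K] Ct →ₗ[K] K)
    (hI1 : ∀ (x₀ : At) (x₁ : Cp), I x₀ (i2 x₁) = - pAC (q1 x₀) x₁)
    (hI2 : ∀ (x₀ : Ap) (x₁ : Ct), I (i1 x₀) x₁ = - pCA (q2 x₁) x₀) :
    (∀ x₀ : At, (∀ x₁ : Ct, I x₀ x₁ = 0) → x₀ = 0) ∧
    (∀ x₁ : Ct, (∀ x₀ : At, I x₀ x₁ = 0) → x₁ = 0) := by
  have hs0 : s ≠ 0 := by rcases hs with h | h <;> simp [h]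
  have hs'0 : s' ≠ 0 := by rcases hs' with h | h <;> simp [h]
  constructor
  · intro x₀ h
    -- first, q1 x₀ = 0
    have hq : q1 x₀ = 0 := by
      apply hAC₁
      intro x
      have := hI1 x₀ x
      rw [h (i2 x)] at this
      exact neg_eq_zero.mp this.symm
    -- lift to Ap
    obtain ⟨y₀, hy₀⟩ := (hex2 x₀).mp hq
    -- y₀ is in the image of b0
    have hmem : y₀ ∈ LinearMap.range b0 := by
      apply mem_of_ann pCA hCA₁ hCA₂
      intro ξ hξ
      have hb2 : b2 ξ = 0 := by
        apply hEF₂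
        intro η
        have h0 : pCA ξ (b0 η) = 0 := hξ (b0 η) ⟨η, rfl⟩
        rw [hdual1] at h0
        exact (mul_eq_zero.mp h0).resolve_left hs0
      obtain ⟨x₁, hx₁⟩ := (hex6 ξ).mp hb2
      rw [← hx₁, ← neg_eq_zero, ← hI2, hy₀]
      exact h x₁
    obtain ⟨η, hη⟩ := hmem
    rw [← hy₀, ← hη]
    exact (hex1 (b0 η)).mpr ⟨η, rfl⟩
  · intro x₁ h
    have hq : q2 x₁ = 0 := by
      apply hCA₁
      intro x
      have := hI2 x x₁
      rw [h (i1 x)] at this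
      exact neg_eq_zero.mp this.symm
    obtain ⟨y₁, hy₁⟩ := (hex5 x₁).mp hq
    have hmem : y₁ ∈ LinearMap.range b3 := by
      apply mem_of_ann pAC hAC₁ hAC₂
      intro ξ hξ
      have hb1 : b1 ξ = 0 := by
        apply hDB₂
        intro η
        have h0 : pAC ξ (b3 η) = 0 := hξ (b3 η) ⟨η, rfl⟩
        rw [hdual2, h0, mul_zero]
      obtain ⟨x₀, hx₀⟩ := (hex3 ξ).mp hb1
      rw [← hx₀, ← neg_eq_zero, ← hI1, hy₁]
      exact h x₀
    obtain ⟨η, hη⟩ := hmem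
    rw [← hy₁, ← hη]
    exact (hex4 (b3 η)).mpr ⟨η, rfl⟩
end
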